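/- If dynamical realizations ρ_G and ρ_H of countable bi-ordered groups (G, <_G) and (H, <_H) merge, then the orbits of the critical-point sets T_G and T_H under the induced action of F = G ∗ H are disjoint: for all f₁, f₂ ∈ F, all g ∈ G \ {1} and all h ∈ H \ {1}, one has ρ_F(f₁)(t_g) ≠ ρ_F(f₂)(t_h). -/

import Mathlib

/-- A bi-order on a group `G`: a strict linear order (irreflexive, transitive, total)
invariant under left and right multiplication. -/
structure IsBiOrder {G : Type*} [Group G] (r : G → G → Prop) : Prop where
  irrefl : ∀ x, ¬ r x x
  trans : ∀ x y z, r x y → r y z → r x z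
  total : ∀ x y, x ≠ y → r x y ∨ r y x
  mul_left : ∀ x y z, r x y → r (z * x) (z * y)
  mul_right : ∀ x y z, r x y → r (x * z) (y * z)

/-- The supremum of a set of reals, computed in the extended reals `[-∞, +∞]`
(so that `realSup ∅ = ⊥ = -∞`). -/
noncomputable def realSup (s : Set ℝ) : EReal :=
  sSup ((fun x : ℝ => (x : EReal)) '' s)

section DynamicalRealization

variable {G H : Type*} [Group G] [Group H]

/-- `ρ` is a dynamical realization of the bi-ordered group `(G, r)`:
a faithful action on `ℝ` by orientation-preserving homeomorphisms satisfying
(i) for `1 < g`, `sup {x | g x > x} > sup {x | g x < x}`;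
(ii) if `hⁿ < g` for all `n : ℤ` then `sup {x | g x ≠ x} > sup {x | h x ≠ x}`;
(iii) for `g ≠ 1` the critical point `t_g = sup {x | g x ≠ x}` is a real number;
(iv) for `g ≠ 1`, `ρ g` is not the identity on any nonempty open interval `(a, b)`
with `b < t_g`. -/
structure IsDynamicalRealization (r : G → G → Prop) (ρ : G →* (ℝ ≃o ℝ)) : Prop where
  inj : Function.Injective ρ
  pos_cond : ∀ g : G, r 1 g → realSup {x | ρ g x < x} < realSup {x | x < ρ g x}
  dom_cond : ∀ g h : G, (∀ n : ℤ, r (h ^ n) g) →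
    realSup {x | ρ h x ≠ x} < realSup {x | ρ g x ≠ x}
  crit_real : ∀ g : G, g ≠ 1 → ∃ t : ℝ, realSup {x | ρ g x ≠ x} = (t : EReal)
  no_local_id : ∀ g : G, g ≠ 1 → ∀ a b : ℝ, a < b →
    (b : EReal) < realSup {x | ρ g x ≠ x} → ∃ x : ℝ, a < x ∧ x < b ∧ ρ g x ≠ x

/-- The set `T_G` of critical points `t_g = sup {x | ρ g x ≠ x}`, `g ≠ 1`. -/
def critSet (ρ : G →* (ℝ ≃o ℝ)) : Set ℝ :=
  {t : ℝ | ∃ g : G, g ≠ 1 ∧ realSup {x | ρ g x ≠ x} = (t : EReal)}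

/-- A letter (an element of `G` or of `H`) regarded as an element of the free product. -/
def letterEmb : G ⊕ H → Monoid.Coprod G H :=
  Sum.elim (fun g => Monoid.Coprod.inl g) (fun h => Monoid.Coprod.inr h)

/-- `w = [f₁, f₂, …, fₙ]` is a normal form word: every letter is a nontrivial element of
its factor, and consecutive letters lie in different factors. -/
def IsNormalWord (w : List (G ⊕ H)) : Prop :=
  (∀ l ∈ w, Sum.elim (fun g : G => g ≠ 1) (fun h : H => h ≠ 1) l) ∧
    w.Chain' (fun a b => a.isLeft ≠ b.isLeft)

/-- The element `fₙ ⋯ f₂ f₁` of the free product represented by the word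
`w = [f₁, f₂, …, fₙ]` (the letter `f₁` acts first). -/
def wordProd (w : List (G ⊕ H)) : Monoid.Coprod G H :=
  ((w.map letterEmb).reverse).prod

/-- The word `w = [f₁, …, fₙ]` is `x`-reduced with respect to the action `ρF`:
for every `k`, `t_{f_k} ≥ ρF (f_{k-1} ⋯ f₁) x`. -/
def XReduced (ρF : Monoid.Coprod G H →* (ℝ ≃o ℝ)) (x : ℝ) (w : List (G ⊕ H)) : Prop :=
  ∀ (k : ℕ) (hk : k < w.length),
    ((ρF (wordProd (w.take k)) x : ℝ) : EReal) ≤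
      realSup {y | ρF (letterEmb (w.get ⟨k, hk⟩)) y ≠ y}

/-- The realizations `ρG` and `ρH` merge: for every `x ∈ T_G ∪ T_H` and every `x`-reduced
normal word `w` over `G ∗ H` whose product fixes `x`, either `x ∈ T_G` and the product
lies in the factor `G`, or `x ∈ T_H` and the product lies in the factor `H`. -/
def Merges (ρG : G →* (ℝ ≃o ℝ)) (ρH : H →* (ℝ ≃o ℝ)) : Prop :=
  ∀ x ∈ critSet ρG ∪ critSet ρH, ∀ w : List (G ⊕ H), IsNormalWord w →
    XReduced (Monoid.Coprod.lift ρG ρH) x w →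
    (Monoid.Coprod.lift ρG ρH) (wordProd w) x = x →
    (x ∈ critSet ρG ∧ ∃ g : G, wordProd w = Monoid.Coprod.inl g) ∨
    (x ∈ critSet ρH ∧ ∃ h : H, wordProd w = Monoid.Coprod.inr h)

end DynamicalRealization
namespace MergeAux

open Monoid List

/-! ### Generalities about `realSup` -/

lemma mem_le_realSup {S : Set ℝ} {y : ℝ} (hy : y ∈ S) : (y : EReal) ≤ realSup S :=
  le_sSup ⟨y, hy, rfl⟩

lemma fix_of_gt {φ : ℝ ≃o ℝ} {t y : ℝ} (h : realSup {x | φ x ≠ x} = (t : EReal))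
    (hy : t < y) : φ y = y := by
  by_contra hne
  have h1 := mem_le_realSup (S := {x | φ x ≠ x}) hne
  rw [h] at h1
  exact absurd (EReal.coe_le_coe_iff.mp h1) (not_le.mpr hy)

lemma fix_crit {φ : ℝ ≃o ℝ} {t : ℝ} (h : realSup {x | φ x ≠ x} = (t : EReal)) : φ t = t := by
  rcases lt_trichotomy (φ t) t with hlt | heq | hgt
  · have h1 : t < φ.symm t := by
      have h2 := φ.symm.strictMono hlt
      rwa [OrderIso.symm_apply_apply] at h2
    have h3 := fix_of_gt h h1
    rw [OrderIso.apply_symm_apply] at h3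
    exact absurd h3 (ne_of_gt h1).symm
  · exact heq
  · exact φ.injective (fix_of_gt h hgt)

lemma map_le_crit {φ : ℝ ≃o ℝ} {t x : ℝ} (h : realSup {x | φ x ≠ x} = (t : EReal))
    (hx : x ≤ t) : φ x ≤ t := by
  have h1 := φ.monotone hx
  rwa [fix_crit h] at h1

lemma nonempty_of_isLUB {S : Set ℝ} {t : ℝ} (h : IsLUB S t) : S.Nonempty := by
  by_contra hne
  rw [Set.not_nonempty_iff_eq_empty] at hne
  subst hne
  have h1 := h.2 (by simp : (t - 1) ∈ upperBounds (∅ : Set ℝ))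
  linarith

lemma realSup_eq_of_isLUB {S : Set ℝ} {t : ℝ} (h : IsLUB S t) : realSup S = (t : EReal) := by
  refine IsLUB.sSup_eq ?_
  constructor
  · rintro _ ⟨x, hx, rfl⟩
    exact EReal.coe_le_coe_iff.mpr (h.1 hx)
  · intro b hb
    induction b using EReal.rec with
    | bot =>
      obtain ⟨x, hx⟩ := nonempty_of_isLUB h
      have := hb ⟨x, hx, rfl⟩
      simp at this
    | coe b =>
      refine EReal.coe_le_coe_iff.mpr (h.2 fun x hx => ?_)
      exact EReal.coe_le_coe_iff.mp (hb ⟨x, hx, rfl⟩)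
    | top => exact le_top

lemma isLUB_of_realSup {S : Set ℝ} {t : ℝ} (h : realSup S = (t : EReal)) :
    S.Nonempty ∧ IsLUB S t := by
  have hl : IsLUB ((fun x : ℝ => (x : EReal)) '' S) (t : EReal) := h ▸ isLUB_sSup _
  have hne : S.Nonempty := by
    by_contra hne
    rw [Set.not_nonempty_iff_eq_empty] at hne
    rw [hne, realSup, Set.image_empty, sSup_empty] at h
    exact absurd h (by simp)
  refine ⟨hne, ⟨fun x hx => ?_, fun b hb => ?_⟩⟩
  · exact EReal.coe_le_coe_iff.mp (hl.1 ⟨x, hx, rfl⟩)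
  · refine EReal.coe_le_coe_iff.mp (hl.2 ?_)
    rintro _ ⟨x, hx, rfl⟩
    exact EReal.coe_le_coe_iff.mpr (hb hx)

/-! ### Words and the action -/

variable {G H : Type*} [Group G] [Group H]
variable (ρG : G →* (ℝ ≃o ℝ)) (ρH : H →* (ℝ ≃o ℝ))

abbrev rF : Monoid.Coprod G H →* (ℝ ≃o ℝ) := Monoid.Coprod.lift ρG ρH

def NT (l : G ⊕ H) : Prop := Sum.elim (fun g : G => g ≠ 1) (fun h : H => h ≠ 1) l

noncomputable def critE (l : G ⊕ H) : EReal := realSup {y | rF ρG ρH (letterEmb l) y ≠ y}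

def XRed (x : ℝ) : List (G ⊕ H) → Prop
  | [] => True
  | l :: w => ((x : EReal) ≤ critE ρG ρH l) ∧ XRed (rF ρG ρH (letterEmb l) x) w

noncomputable def act (x : ℝ) (w : List (G ⊕ H)) : ℝ := rF ρG ρH (wordProd w) x

variable {ρG ρH}

lemma rF_inl (g : G) : rF ρG ρH (letterEmb (Sum.inl g)) = ρG g :=
  Monoid.Coprod.lift_apply_inl ρG ρH g

lemma rF_inr (h : H) : rF ρG ρH (letterEmb (Sum.inr h)) = ρH h :=
  Monoid.Coprod.lift_apply_inr ρG ρH h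

lemma critE_inl (g : G) : critE ρG ρH (Sum.inl g) = realSup {y | ρG g y ≠ y} := by
  rw [critE, rF_inl]

lemma critE_inr (h : H) : critE ρG ρH (Sum.inr h) = realSup {y | ρH h y ≠ y} := by
  rw [critE, rF_inr]

lemma wordProd_nil : wordProd ([] : List (G ⊕ H)) = 1 := rfl

lemma wordProd_cons (a : G ⊕ H) (w : List (G ⊕ H)) :
    wordProd (a :: w) = wordProd w * letterEmb a := by
  simp [wordProd]

lemma wordProd_append (u v : List (G ⊕ H)) :
    wordProd (u ++ v) = wordProd v * wordProd u := by
  simp [wordProd]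

@[simp] lemma act_nil (x : ℝ) : act ρG ρH x [] = x := by
  rw [act, wordProd_nil, map_one]; rfl

lemma act_cons (x : ℝ) (a : G ⊕ H) (w : List (G ⊕ H)) :
    act ρG ρH x (a :: w) = act ρG ρH (rF ρG ρH (letterEmb a) x) w := by
  rw [act, act, wordProd_cons, map_mul]; rfl

lemma act_append (x : ℝ) (u v : List (G ⊕ H)) :
    act ρG ρH x (u ++ v) = act ρG ρH (act ρG ρH x u) v := by
  rw [act, act, act, wordProd_append, map_mul]; rfl

lemma act_singleton (x : ℝ) (a : G ⊕ H) :
    act ρG ρH x [a] = rF ρG ρH (letterEmb a) x := by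
  rw [act_cons, act_nil]

lemma XRed_append {u v : List (G ⊕ H)} {x : ℝ} :
    XRed ρG ρH x (u ++ v) ↔ XRed ρG ρH x u ∧ XRed ρG ρH (act ρG ρH x u) v := by
  induction u generalizing x with
  | nil => simp [XRed]
  | cons a u ih =>
    rw [List.cons_append, XRed, XRed, ih, act_cons, and_assoc]

lemma xred_XReduced {w : List (G ⊕ H)} {x : ℝ} (h : XRed ρG ρH x w) :
    XReduced (Monoid.Coprod.lift ρG ρH) x w := by
  induction w generalizing x with
  | nil => intro k hk; exact absurd hk (by simp)
  | cons a w ih =>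
    obtain ⟨h1, h2⟩ := h
    intro k hk
    cases k with
    | zero =>
      simpa [wordProd_nil, critE] using h1
    | succ k =>
      have h3 := ih h2 k (by simpa using hk)
      rw [List.take_succ_cons, wordProd_cons, map_mul]
      exact h3




variable {G H : Type*} [Group G] [Group H]
variable {ρG : G →* (ℝ ≃o ℝ)} {ρH : H →* (ℝ ≃o ℝ)}

/-! ### Normal words, inverses -/

lemma isNormal_nil : IsNormalWord ([] : List (G ⊕ H)) := ⟨by simp, List.isChain_nil⟩

lemma isNormal_singleton {a : G ⊕ H} (h : NT a) : IsNormalWord [a] := by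
  refine ⟨?_, List.isChain_singleton a⟩
  intro l hl
  rw [List.mem_singleton] at hl
  subst hl
  exact h

def linv : G ⊕ H → G ⊕ H := Sum.elim (fun g => Sum.inl g⁻¹) (fun h => Sum.inr h⁻¹)

@[simp] lemma letterEmb_linv (l : G ⊕ H) :
    letterEmb (linv l) = (letterEmb l)⁻¹ := by
  cases l <;> simp [linv, letterEmb]

@[simp] lemma isLeft_linv (l : G ⊕ H) : (linv l).isLeft = l.isLeft := by
  cases l <;> rfl

lemma NT_linv {l : G ⊕ H} (h : NT l) : NT (linv l) := by
  cases l <;> simpa [NT, linv] using h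

lemma inv_apply_eq_iff (φ : ℝ ≃o ℝ) (y : ℝ) : φ⁻¹ y ≠ y ↔ φ y ≠ y := by
  show φ.symm y ≠ y ↔ _
  rw [ne_eq, OrderIso.symm_apply_eq]
  exact not_congr (eq_comm)

lemma critE_linv (l : G ⊕ H) : critE ρG ρH (linv l) = critE ρG ρH l := by
  rw [critE, critE]
  congr 1
  ext y
  simp only [Set.mem_setOf_eq, letterEmb_linv, map_inv]
  exact inv_apply_eq_iff _ y

def revInv (w : List (G ⊕ H)) : List (G ⊕ H) := (w.map linv).reverse

@[simp] lemma revInv_nil : revInv ([] : List (G ⊕ H)) = [] := rfl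

lemma revInv_cons (a : G ⊕ H) (w : List (G ⊕ H)) :
    revInv (a :: w) = revInv w ++ [linv a] := by simp [revInv]

lemma revInv_concat (u : List (G ⊕ H)) (a : G ⊕ H) :
    revInv (u ++ [a]) = linv a :: revInv u := by simp [revInv]

lemma wordProd_revInv (w : List (G ⊕ H)) : wordProd (revInv w) = (wordProd w)⁻¹ := by
  induction w with
  | nil => simp [wordProd_nil]
  | cons a w ih =>
    rw [revInv_cons, wordProd_append, ih, wordProd_cons a w, mul_inv_rev]
    congr 1
    rw [wordProd_cons, wordProd_nil, one_mul, letterEmb_linv]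

lemma isNormal_revInv {w : List (G ⊕ H)} (h : IsNormalWord w) :
    IsNormalWord (revInv w) := by
  obtain ⟨h1, h2⟩ := h
  constructor
  · intro l hl
    rw [revInv, List.mem_reverse, List.mem_map] at hl
    obtain ⟨a, ha, rfl⟩ := hl
    exact NT_linv (h1 a ha)
  · rw [revInv]
    show List.IsChain _ _
    rw [List.isChain_reverse]
    refine (List.isChain_map _).mpr ?_
    refine List.IsChain.imp ?_ h2
    intro a b hab
    show (linv b).isLeft ≠ (linv a).isLeft
    simpa [isLeft_linv] using hab.symm

lemma isNormal_of_append_left {u v : List (G ⊕ H)} (h : IsNormalWord (u ++ v)) :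
    IsNormalWord u :=
  ⟨fun l hl => h.1 l (List.mem_append_left _ hl), List.IsChain.prefix h.2 (List.prefix_append u v)⟩

lemma isNormal_of_append_right {u v : List (G ⊕ H)} (h : IsNormalWord (u ++ v)) :
    IsNormalWord v :=
  ⟨fun l hl => h.1 l (List.mem_append_right _ hl), List.IsChain.suffix h.2 (List.suffix_append u v)⟩

lemma xred_revInv (hcrit : ∀ l : G ⊕ H, NT l → ∃ c : ℝ, critE ρG ρH l = (c : EReal)) :
    ∀ (w : List (G ⊕ H)) (x : ℝ), IsNormalWord w → XRed ρG ρH x w →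
      XRed ρG ρH (act ρG ρH x w) (revInv w) ∧
        act ρG ρH (act ρG ρH x w) (revInv w) = x := by
  intro w
  induction w with
  | nil => intro x _ _; simpa [XRed] using trivial
  | cons a w ih =>
    intro x hn hx
    obtain ⟨h1, h2⟩ := hx
    have hna : NT a := hn.1 a List.mem_cons_self
    have hnw : IsNormalWord w := ⟨fun l hl => hn.1 l (List.mem_cons_of_mem _ hl), List.IsChain.tail hn.2⟩
    obtain ⟨ih1, ih2⟩ := ih (rF ρG ρH (letterEmb a) x) hnw h2
    obtain ⟨c, hc⟩ := hcrit a hna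
    have hxc : x ≤ c := EReal.coe_le_coe_iff.mp (hc ▸ h1)
    have himage : rF ρG ρH (letterEmb a) x ≤ c := map_le_crit (by rw [← critE]; exact hc) hxc
    rw [revInv_cons, act_cons]
    constructor
    · rw [XRed_append]
      refine ⟨ih1, ?_⟩
      rw [ih2]
      refine ⟨?_, trivial⟩
      rw [critE_linv, hc]
      exact EReal.coe_le_coe_iff.mpr himage
    · rw [act_append, ih2, act_singleton, letterEmb_linv, map_inv]
      exact RelIso.inv_apply_self _ _

/-! ### Gluing words -/

def combine : G ⊕ H → G ⊕ H → G ⊕ H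
  | Sum.inl g, Sum.inl g' => Sum.inl (g' * g)
  | Sum.inr h, Sum.inr h' => Sum.inr (h' * h)
  | l, _ => l

lemma combine_spec {a b : G ⊕ H} (hab : a.isLeft = b.isLeft) :
    letterEmb (combine a b) = letterEmb b * letterEmb a ∧
      (combine a b).isLeft = a.isLeft ∧
      (¬ NT (combine a b) → letterEmb b * letterEmb a = (1 : Monoid.Coprod G H)) := by
  cases a with
  | inl ga =>
    cases b with
    | inl gb =>
      refine ⟨by simp [combine, letterEmb], rfl, ?_⟩
      intro hnt
      rw [NT] at hnt
      simp only [combine, Sum.elim_inl, not_not] at hnt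
      simp [letterEmb, ← map_mul, hnt]
    | inr hb => simp at hab
  | inr ha =>
    cases b with
    | inl gb => simp at hab
    | inr hb =>
      refine ⟨by simp [combine, letterEmb], rfl, ?_⟩
      intro hnt
      rw [NT] at hnt
      simp only [combine, Sum.elim_inr, not_not] at hnt
      simp [letterEmb, ← map_mul, hnt]

lemma fix_of_not_le {l : G ⊕ H} {p : ℝ} (h : ¬ ((p : EReal) ≤ critE ρG ρH l)) :
    rF ρG ρH (letterEmb l) p = p := by
  by_contra hne
  exact h (mem_le_realSup hne)

lemma glue : ∀ (n : ℕ) (w₁ w₂ : List (G ⊕ H)) (x : ℝ), w₁.length ≤ n →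
    IsNormalWord w₁ → IsNormalWord w₂ → XRed ρG ρH x w₁ →
    XRed ρG ρH (act ρG ρH x w₁) w₂ →
    ∃ w, IsNormalWord w ∧ XRed ρG ρH x w ∧
      act ρG ρH x w = act ρG ρH (act ρG ρH x w₁) w₂ := by
  intro n
  induction n with
  | zero =>
    intro w₁ w₂ x hlen hn1 hn2 hx1 hx2
    have : w₁ = [] := List.length_eq_zero_iff.mp (Nat.le_zero.mp hlen)
    subst this
    exact ⟨w₂, hn2, by rwa [act_nil] at hx2, by rw [act_nil]⟩
  | succ n ih =>
    intro w₁ w₂ x hlen hn1 hn2 hx1 hx2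
    rcases w₁.eq_nil_or_concat' with rfl | ⟨u, a, rfl⟩
    · exact ⟨w₂, hn2, by rwa [act_nil] at hx2, by rw [act_nil]⟩
    · obtain ⟨hxu, hxa⟩ := XRed_append.mp hx1
      have hpa : ((act ρG ρH x u : ℝ) : EReal) ≤ critE ρG ρH a := hxa.1
      have hnu : IsNormalWord u := isNormal_of_append_left hn1
      have hNTa : NT a := hn1.1 a (by simp)
      have hact1 : act ρG ρH x (u ++ [a]) = rF ρG ρH (letterEmb a) (act ρG ρH x u) := by
        rw [act_append, act_singleton]
      cases w₂ with
      | nil => exact ⟨u ++ [a], hn1, hx1, by rw [act_nil]⟩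
      | cons b v =>
        have hqb := hx2.1
        have hxv := hx2.2
        have hNTb : NT b := hn2.1 b List.mem_cons_self
        have hnv : IsNormalWord v :=
          ⟨fun l hl => hn2.1 l (List.mem_cons_of_mem _ hl), List.IsChain.tail hn2.2⟩
        by_cases hab : a.isLeft = b.isLeft
        · obtain ⟨hc1, hc2, hc3⟩ := combine_spec hab
          set c := combine a b with hcdef
          set p := act ρG ρH x u with hp
          have hkey : rF ρG ρH (letterEmb c) p
              = rF ρG ρH (letterEmb b) (act ρG ρH x (u ++ [a])) := by
            rw [hc1, map_mul, hact1]; rfl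
          by_cases hgood : NT c ∧ ((p : EReal) ≤ critE ρG ρH c)
          · refine ⟨u ++ c :: v, ?_, ?_, ?_⟩
            · constructor
              · intro l hl
                rcases List.mem_append.mp hl with hl | hl
                · exact hnu.1 l hl
                · rcases List.mem_cons.mp hl with rfl | hl
                  · exact hgood.1
                  · exact hnv.1 l hl
              · show List.IsChain _ _
                rw [List.isChain_append]
                refine ⟨hnu.2, ?_, ?_⟩
                · rw [List.isChain_cons]
                  refine ⟨?_, hnv.2⟩
                  intro y hy
                  have := (List.isChain_cons.mp hn2.2).1 y hy
                  rw [hc2, hab]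
                  exact this
                · intro l hl y hy
                  rw [List.head?_cons, Option.mem_some_iff] at hy
                  subst hy
                  have h5 := (List.isChain_append.mp hn1.2).2.2 l hl a (by simp)
                  rw [hc2]
                  exact h5
            · rw [XRed_append]
              refine ⟨hxu, hgood.2, ?_⟩
              rw [hkey]
              exact hxv
            · rw [act_append]
              show act ρG ρH p (c :: v) = _
              rw [act_cons, hkey, ← act_cons]
          · have hfix : rF ρG ρH (letterEmb c) p = p := by
              rcases (not_and_or.mp hgood) with hng | hnle
              · rw [hc1] at *
                rw [hc3 hng, map_one]
                rfl
              · exact fix_of_not_le hnle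
            have hq : rF ρG ρH (letterEmb b) (act ρG ρH x (u ++ [a])) = p := by
              rw [← hkey, hfix]
            have hxv' : XRed ρG ρH (act ρG ρH x u) v := by
              rw [← hp, ← hq]; exact hxv
            have hlen' : u.length ≤ n := by
              have := hlen; simp only [List.length_append, List.length_singleton] at this
              omega
            obtain ⟨w, hw1, hw2, hw3⟩ := ih u v x hlen' hnu hnv hxu hxv'
            refine ⟨w, hw1, hw2, ?_⟩
            rw [hw3]
            show act ρG ρH p v = _
            rw [← hq, ← act_cons]
        · refine ⟨(u ++ [a]) ++ b :: v, ?_, XRed_append.mpr ⟨hx1, hx2⟩, by rw [act_append]⟩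
          constructor
          · intro l hl
            rcases List.mem_append.mp hl with hl | hl
            · exact hn1.1 l hl
            · exact hn2.1 l hl
          · show List.IsChain _ _
            rw [List.isChain_append]
            refine ⟨hn1.2, hn2.2, ?_⟩
            intro l hl y hy
            rw [List.getLast?_concat, Option.mem_some_iff] at hl
            rw [List.head?_cons, Option.mem_some_iff] at hy
            subst hl; subst hy
            exact hab

end MergeAux
namespace MergeAux

open Monoid

variable {G H : Type*} [Group G] [Group H]
variable {ρG : G →* (ℝ ≃o ℝ)} {ρH : H →* (ℝ ≃o ℝ)}

lemma letterEmb_eq_one_of_not_NT {l : G ⊕ H} (h : ¬ NT l) :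
    letterEmb l = (1 : Monoid.Coprod G H) := by
  cases l with
  | inl g =>
    rw [NT] at h
    simp only [Sum.elim_inl, not_not] at h
    simp [letterEmb, h]
  | inr h' =>
    rw [NT] at h
    simp only [Sum.elim_inr, not_not] at h
    simp [letterEmb, h]

lemma letterWord (l : G ⊕ H) (y : ℝ) :
    ∃ w, IsNormalWord w ∧ XRed ρG ρH y w ∧
      act ρG ρH y w = rF ρG ρH (letterEmb l) y := by
  by_cases hNT : NT l
  · by_cases hle : ((y : ℝ) : EReal) ≤ critE ρG ρH l
    · exact ⟨[l], isNormal_singleton hNT, ⟨hle, trivial⟩, act_singleton y l⟩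
    · exact ⟨[], isNormal_nil, trivial, by rw [act_nil, fix_of_not_le hle]⟩
  · refine ⟨[], isNormal_nil, trivial, ?_⟩
    rw [act_nil, letterEmb_eq_one_of_not_NT hNT, map_one]
    rfl

lemma red (f : Monoid.Coprod G H) : ∀ x : ℝ,
    ∃ w, IsNormalWord w ∧ XRed ρG ρH x w ∧ act ρG ρH x w = rF ρG ρH f x := by
  induction f using Monoid.Coprod.induction_on' with
  | one =>
    intro x
    refine ⟨[], isNormal_nil, trivial, ?_⟩
    rw [act_nil, map_one]; rfl
  | inl_mul m f ihf =>
    intro x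
    obtain ⟨w₁, h1, h2, h3⟩ := ihf x
    obtain ⟨w₂, g1, g2, g3⟩ := letterWord (ρG := ρG) (ρH := ρH) (Sum.inl m) (act ρG ρH x w₁)
    obtain ⟨w, k1, k2, k3⟩ := glue w₁.length w₁ w₂ x le_rfl h1 g1 h2 g2
    refine ⟨w, k1, k2, ?_⟩
    rw [k3, g3, h3, map_mul]
    rfl
  | inr_mul m f ihf =>
    intro x
    obtain ⟨w₁, h1, h2, h3⟩ := ihf x
    obtain ⟨w₂, g1, g2, g3⟩ := letterWord (ρG := ρG) (ρH := ρH) (Sum.inr m) (act ρG ρH x w₁)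
    obtain ⟨w, k1, k2, k3⟩ := glue w₁.length w₁ w₂ x le_rfl h1 g1 h2 g2
    refine ⟨w, k1, k2, ?_⟩
    rw [k3, g3, h3, map_mul]
    rfl

lemma conj_crit {h a : H} {s p : ℝ}
    (hs : realSup {y | ρH h y ≠ y} = (s : EReal)) (hp : ρH a p = s) :
    realSup {y | ρH (a⁻¹ * h * a) y ≠ y} = (p : EReal) := by
  obtain ⟨_, hlub⟩ := isLUB_of_realSup hs
  have hset : {y | ρH (a⁻¹ * h * a) y ≠ y} = (ρH a) ⁻¹' {y | ρH h y ≠ y} := by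
    ext y
    simp only [Set.mem_setOf_eq, Set.mem_preimage, map_mul, map_inv]
    show (ρH a)⁻¹ ((ρH h) ((ρH a) y)) ≠ y ↔ _
    rw [ne_eq, show ((ρH a)⁻¹ : ℝ ≃o ℝ) = (ρH a).symm from rfl, OrderIso.symm_apply_eq]
  rw [hset]
  refine realSup_eq_of_isLUB ?_
  refine (OrderIso.isLUB_preimage (ρH a)).mpr ?_
  rwa [hp]

lemma strip : ∀ (n : ℕ) (w : List (G ⊕ H)) (t : ℝ), w.length ≤ n →
    IsNormalWord w → XRed ρG ρH t w →
    ∀ h : H, h ≠ 1 → realSup {y | ρH h y ≠ y} = ((act ρG ρH t w : ℝ) : EReal) →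
    ∃ (w' : List (G ⊕ H)) (h' : H), IsNormalWord w' ∧ XRed ρG ρH t w' ∧ h' ≠ 1 ∧
      realSup {y | ρH h' y ≠ y} = ((act ρG ρH t w' : ℝ) : EReal) ∧
      (w' = [] ∨ ∃ (u : List (G ⊕ H)) (g' : G), w' = u ++ [Sum.inl g']) := by
  intro n
  induction n with
  | zero =>
    intro w t hlen hn hx h hne hs
    have : w = [] := List.length_eq_zero_iff.mp (Nat.le_zero.mp hlen)
    subst this
    exact ⟨[], h, hn, hx, hne, hs, Or.inl rfl⟩
  | succ n ih =>
    intro w t hlen hn hx h hne hs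
    rcases w.eq_nil_or_concat' with rfl | ⟨u, a, rfl⟩
    · exact ⟨[], h, hn, hx, hne, hs, Or.inl rfl⟩
    · cases a with
      | inl g' => exact ⟨u ++ [Sum.inl g'], h, hn, hx, hne, hs, Or.inr ⟨u, g', rfl⟩⟩
      | inr aH =>
        have hnu : IsNormalWord u := isNormal_of_append_left hn
        have hxu : XRed ρG ρH t u := (XRed_append.mp hx).1
        have hp : ρH aH (act ρG ρH t u) = act ρG ρH t (u ++ [Sum.inr aH]) := by
          rw [act_append, act_singleton, rF_inr]
        have hne' : aH⁻¹ * h * aH ≠ 1 := by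
          intro hc
          apply hne
          have : h = aH * (aH⁻¹ * h * aH) * aH⁻¹ := by group
          rw [hc, mul_one] at this
          rw [this, mul_inv_cancel]
        have hs' : realSup {y | ρH (aH⁻¹ * h * aH) y ≠ y}
            = ((act ρG ρH t u : ℝ) : EReal) :=
          conj_crit hs hp
        have hlen' : u.length ≤ n := by
          simp only [List.length_append, List.length_singleton] at hlen
          omega
        exact ih u t hlen' hnu hxu (aH⁻¹ * h * aH) hne' hs'

end MergeAux
namespace MergeAux

open Monoid

universe u v

variable {G : Type u} {H : Type v} [Group G] [Group H]

/-! ### Normal form uniqueness via `CoprodI` -/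

def Fa (G : Type u) (H : Type v) : Bool → Type (max u v) :=
  fun b => cond b (ULift G) (ULift H)

instance FaGroup (G : Type u) (H : Type v) [Group G] [Group H] (b : Bool) :
    Group (Fa G H b) := by
  cases b
  · exact inferInstanceAs (Group (ULift H))
  · exact inferInstanceAs (Group (ULift G))

def toSig : G ⊕ H → (Σ b, Fa G H b) :=
  Sum.elim (fun g => ⟨true, ULift.up g⟩) (fun h => ⟨false, ULift.up h⟩)

lemma toSig_fst (l : G ⊕ H) : (toSig l).1 = l.isLeft := by cases l <;> rfl

def φmap : Monoid.Coprod G H →* Monoid.CoprodI (Fa G H) :=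
  Monoid.Coprod.lift
    ((Monoid.CoprodI.of (M := Fa G H) (i := true)).comp
      ((MulEquiv.ulift (α := G)).symm.toMonoidHom))
    ((Monoid.CoprodI.of (M := Fa G H) (i := false)).comp
      ((MulEquiv.ulift (α := H)).symm.toMonoidHom))

lemma φmap_letter (l : G ⊕ H) :
    φmap (letterEmb l) = Monoid.CoprodI.of (toSig l).2 := by
  cases l with
  | inl g => exact Monoid.Coprod.lift_apply_inl _ _ g
  | inr h => exact Monoid.Coprod.lift_apply_inr _ _ h

lemma word_prod_injective :
    Function.Injective (Monoid.CoprodI.Word.prod (M := Fa G H)) := by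
  classical
  intro w₁ w₂ hw
  exact (Monoid.CoprodI.Word.equiv (M := Fa G H)).symm.injective hw

def toWord {w : List (G ⊕ H)} (hn : IsNormalWord w) : Monoid.CoprodI.Word (Fa G H) where
  toList := (w.map toSig).reverse
  ne_one := by
    intro l hl
    rw [List.mem_reverse, List.mem_map] at hl
    obtain ⟨a, ha, rfl⟩ := hl
    have := hn.1 a ha
    cases a with
    | inl g =>
      simp only [NT, Sum.elim_inl] at this
      exact fun hc => this (congrArg ULift.down hc)
    | inr h =>
      simp only [NT, Sum.elim_inr] at this
      exact fun hc => this (congrArg ULift.down hc)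
  chain_ne := by
    rw [List.isChain_reverse]
    refine (List.isChain_map _).mpr ?_
    refine List.IsChain.imp ?_ hn.2
    intro a b hab
    show (toSig b).1 ≠ (toSig a).1
    rw [toSig_fst, toSig_fst]
    exact hab.symm

lemma φmap_wordProd {w : List (G ⊕ H)} (hn : IsNormalWord w) :
    φmap (wordProd w) = (toWord hn).prod := by
  rw [wordProd, map_list_prod, Monoid.CoprodI.Word.prod]
  show _ = List.prod (List.map _ (toWord hn).toList)
  rw [show (toWord hn).toList = (w.map toSig).reverse from rfl]
  rw [← List.map_reverse, ← List.map_reverse, List.map_map, List.map_map]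
  congr 1
  refine List.map_congr_left ?_
  intro a _
  exact φmap_letter a

lemma toList_length_le_one_of_prod_eq_of {b : Bool} (m : Fa G H b)
    (W : Monoid.CoprodI.Word (Fa G H)) (h : W.prod = Monoid.CoprodI.of m) :
    W.toList.length ≤ 1 := by
  by_cases hm : m = 1
  · subst hm
    have h1 : W.prod = Monoid.CoprodI.Word.prod (Monoid.CoprodI.Word.empty (M := Fa G H)) := by
      rw [h, map_one, Monoid.CoprodI.Word.prod_empty]
    have h2 := word_prod_injective h1
    rw [h2]
    exact Nat.zero_le 1
  · set Ws : Monoid.CoprodI.Word (Fa G H) :=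
      ⟨[⟨b, m⟩], by
        intro l hl
        rw [List.mem_singleton] at hl
        subst hl
        exact hm, List.isChain_singleton _⟩ with hWs
    have h1 : W.prod = Ws.prod := by
      rw [h, hWs, Monoid.CoprodI.Word.prod]
      simp
    have h2 := word_prod_injective h1
    rw [h2, hWs]
    simp

lemma notSingle {w : List (G ⊕ H)} (hn : IsNormalWord w) (hlen : 2 ≤ w.length) :
    (∀ g : G, wordProd w ≠ Monoid.Coprod.inl g) ∧
      (∀ h : H, wordProd w ≠ Monoid.Coprod.inr h) := by
  have hlen' : (toWord hn).toList.length = w.length := by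
    show ((w.map toSig).reverse).length = _
    rw [List.length_reverse, List.length_map]
  constructor
  · intro g hg
    have h1 : (toWord hn).prod = Monoid.CoprodI.of (M := Fa G H) (i := true) (ULift.up g) := by
      rw [← φmap_wordProd hn, hg]
      exact Monoid.Coprod.lift_apply_inl _ _ g
    have h2 := toList_length_le_one_of_prod_eq_of _ _ h1
    rw [hlen'] at h2
    omega
  · intro h hh
    have h1 : (toWord hn).prod = Monoid.CoprodI.of (M := Fa G H) (i := false) (ULift.up h) := by
      rw [← φmap_wordProd hn, hh]
      exact Monoid.Coprod.lift_apply_inr _ _ h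
    have h2 := toList_length_le_one_of_prod_eq_of _ _ h1
    rw [hlen'] at h2
    omega

end MergeAux
theorem merges_orbits_of_critSets_disjoint
    {G H : Type*} [Group G] [Group H] [Countable G] [Countable H]
    (rG : G → G → Prop) (rH : H → H → Prop)
    (hrG : IsBiOrder rG) (hrH : IsBiOrder rH)
    (ρG : G →* (ℝ ≃o ℝ)) (ρH : H →* (ℝ ≃o ℝ))
    (hG : IsDynamicalRealization rG ρG) (hH : IsDynamicalRealization rH ρH)
    (hm : Merges ρG ρH) :
    ∀ (f₁ f₂ : Monoid.Coprod G H) (g : G) (h : H), g ≠ 1 → h ≠ 1 →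
      ∀ t s : ℝ, realSup {x | ρG g x ≠ x} = (t : EReal) →
        realSup {x | ρH h x ≠ x} = (s : EReal) →
        (Monoid.Coprod.lift ρG ρH) f₁ t ≠ (Monoid.Coprod.lift ρG ρH) f₂ s := by
  classical
  intro f₁ f₂ g h hg hh t s hts hss heq
  have hGfix : ρG g t = t := MergeAux.fix_crit hts
  have hf : MergeAux.rF ρG ρH (f₂⁻¹ * f₁) t = s := by
    have h0 : MergeAux.rF ρG ρH (f₂⁻¹ * f₁) t
        = ((MergeAux.rF ρG ρH f₂)⁻¹ : ℝ ≃o ℝ) ((MergeAux.rF ρG ρH f₁) t) := by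
      rw [map_mul, map_inv]; rfl
    rw [h0, show (MergeAux.rF ρG ρH f₁) t = (MergeAux.rF ρG ρH f₂) s from heq]
    exact RelIso.inv_apply_self _ _
  obtain ⟨w₁, hw1n, hw1x, hw1a⟩ := MergeAux.red (ρG := ρG) (ρH := ρH) (f₂⁻¹ * f₁) t
  have hsupp : realSup {y | ρH h y ≠ y} = ((MergeAux.act ρG ρH t w₁ : ℝ) : EReal) := by
    rw [hw1a, hf]; exact hss
  obtain ⟨w', h', hn', hx', hne', hsup', hshape⟩ :=
    MergeAux.strip w₁.length w₁ t le_rfl hw1n hw1x h hh hsupp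
  have hcrit : ∀ l : G ⊕ H, MergeAux.NT l → ∃ c : ℝ, MergeAux.critE ρG ρH l = (c : EReal) := by
    intro l hl
    cases l with
    | inl g0 =>
      obtain ⟨c, hc⟩ := hG.crit_real g0 (by simpa [MergeAux.NT] using hl)
      exact ⟨c, by rw [MergeAux.critE_inl]; exact hc⟩
    | inr h0 =>
      obtain ⟨c, hc⟩ := hH.crit_real h0 (by simpa [MergeAux.NT] using hl)
      exact ⟨c, by rw [MergeAux.critE_inr]; exact hc⟩
  have hmem : t ∈ critSet ρG ∪ critSet ρH := Or.inl ⟨g, hg, hts⟩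
  rcases hshape with rfl | ⟨u, g', rfl⟩
  · -- case `w' = []`
    rw [MergeAux.act_nil] at hsup'
    set W : List (G ⊕ H) := [Sum.inl g, Sum.inr h'] with hW
    have hWn : IsNormalWord W := by
      constructor
      · intro l hl
        rcases List.mem_cons.mp hl with rfl | hl
        · exact hg
        · rcases List.mem_cons.mp hl with rfl | hl
          · exact hne'
          · simp at hl
      · exact List.isChain_cons_cons.mpr ⟨by simp, List.isChain_singleton _⟩
    have hWx : MergeAux.XRed ρG ρH t W := by
      refine ⟨?_, ?_, trivial⟩
      · rw [MergeAux.critE_inl, hts]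
      · rw [MergeAux.rF_inl, hGfix, MergeAux.critE_inr, hsup']
    have hWfix : (Monoid.Coprod.lift ρG ρH) (wordProd W) t = t := by
      show MergeAux.act ρG ρH t W = t
      rw [show W = [Sum.inl g, Sum.inr h'] from rfl, MergeAux.act_cons,
        MergeAux.act_singleton, MergeAux.rF_inl, hGfix, MergeAux.rF_inr]
      exact MergeAux.fix_crit hsup'
    have hns := MergeAux.notSingle hWn (by rw [hW]; simp)
    rcases hm t hmem W hWn (MergeAux.xred_XReduced hWx) hWfix with
      ⟨_, g'', hgW⟩ | ⟨_, h'', hhW⟩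
    · exact hns.1 g'' hgW
    · exact hns.2 h'' hhW
  · -- case `w' = u ++ [Sum.inl g']`
    set w' : List (G ⊕ H) := u ++ [Sum.inl g'] with hw'def
    obtain ⟨hrx, hra⟩ := MergeAux.xred_revInv hcrit w' t hn' hx'
    set s' : ℝ := MergeAux.act ρG ρH t w' with hs'def
    have hfixs' : ρH h' s' = s' := MergeAux.fix_crit hsup'
    have h9 : MergeAux.rF ρG ρH (letterEmb (Sum.inr h')) s' = s' := by
      rw [MergeAux.rF_inr]; exact hfixs'
    set W : List (G ⊕ H) := w' ++ Sum.inr h' :: MergeAux.revInv w' with hWdef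
    have hrn := MergeAux.isNormal_revInv hn'
    have hWn : IsNormalWord W := by
      constructor
      · intro l hl
        rcases List.mem_append.mp hl with hl | hl
        · exact hn'.1 l hl
        · rcases List.mem_cons.mp hl with rfl | hl
          · exact hne'
          · exact hrn.1 l hl
      · show List.IsChain _ _
        rw [List.isChain_append]
        refine ⟨hn'.2, ?_, ?_⟩
        · rw [hw'def, MergeAux.revInv_concat]
          refine List.isChain_cons_cons.mpr ⟨by simp, ?_⟩
          rw [← MergeAux.revInv_concat]
          exact hrn.2
        · intro l hl y hy
          rw [hw'def, List.getLast?_concat, Option.mem_some_iff] at hl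
          rw [List.head?_cons, Option.mem_some_iff] at hy
          subst hl; subst hy
          simp
    have hWx : MergeAux.XRed ρG ρH t W := by
      rw [hWdef, MergeAux.XRed_append]
      refine ⟨hx', ?_, ?_⟩
      · rw [MergeAux.critE_inr, hsup']
      · rw [h9]
        exact hrx
    have hWfix : (Monoid.Coprod.lift ρG ρH) (wordProd W) t = t := by
      show MergeAux.act ρG ρH t W = t
      rw [hWdef, MergeAux.act_append, MergeAux.act_cons, h9]
      exact hra
    have hlenW : 2 ≤ W.length := by
      rw [hWdef, hw'def]
      simp only [List.length_append, List.length_cons, MergeAux.revInv,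
        List.length_reverse, List.length_map, List.length_singleton]
      omega
    have hns := MergeAux.notSingle hWn hlenW
    rcases hm t hmem W hWn (MergeAux.xred_XReduced hWx) hWfix with
      ⟨_, g'', hgW⟩ | ⟨_, h'', hhW⟩
    · exact hns.1 g'' hgW
    · exact hns.2 h'' hhW
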